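/- Let n ≥ 1 be an integer and x > 0. Then ∫_ℝ sign(x−y)·e^{−|x−y|}·e^{−(2n+1)|y|} dy = ((2n+1)/(2n(n+1)))·(e^{−x} − e^{−(2n+1)x}). -/

import Mathlib

open MeasureTheory Finset

lemma aux_int_Ioi (b c : ℝ) (hb : 0 < b) :
    ∫ y in Set.Ioi c, Real.exp (-(b * y)) = Real.exp (-(b * c)) / b := by
  have h := integral_comp_mul_left_Ioi (fun u => Real.exp (-u)) c hb
  simp only [smul_eq_mul] at h
  rw [h, integral_exp_neg_Ioi]
  ring

lemma aux_int_Iic (b c : ℝ) (hb : 0 < b) :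
    ∫ y in Set.Iic c, Real.exp (b * y) = Real.exp (b * c) / b := by
  have h := integral_comp_neg_Iic c (fun u => Real.exp (-(b * u)))
  simp only [mul_neg, neg_neg] at h
  rw [h, aux_int_Ioi b (-c) hb]
  ring_nf

lemma aux_integrable_Ioi (b c : ℝ) (hb : 0 < b) :
    IntegrableOn (fun y => Real.exp (-(b * y))) (Set.Ioi c) := by
  simpa [neg_mul] using exp_neg_integrableOn_Ioi c hb

lemma aux_integrable_Iic (b c : ℝ) (hb : 0 < b) :
    IntegrableOn (fun y => Real.exp (b * y)) (Set.Iic c) := by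
  have h : Integrable (fun y => (Set.Iic (b * c)).indicator Real.exp (b * y)) :=
    ((integrable_indicator_iff measurableSet_Iic).2 (integrableOn_exp_Iic (b * c))).comp_mul_left'
      hb.ne'
  have h2 : Integrable ((Set.Iic c).indicator (fun y => Real.exp (b * y))) := by
    convert h using 1
    ext y
    rw [← Set.indicator_comp_right]
    congr 1
    ext z
    simp only [Set.mem_preimage, Set.mem_Iic]
    exact (mul_le_mul_iff_right₀ hb).symm
  exact (integrable_indicator_iff measurableSet_Iic).1 h2

/-- For every integer `n ≥ 1` and real `x > 0`,
`∫_ℝ sign(x−y)·e^{−|x−y|}·e^{−(2n+1)|y|} dy = ((2n+1)/(2n(n+1)))·(e^{−x} − e^{−(2n+1)x})`. -/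
theorem stmt2 (n : ℕ) (hn : 1 ≤ n) (x : ℝ) (hx : 0 < x) :
    ∫ y : ℝ, Real.sign (x - y) * Real.exp (-|x - y|) * Real.exp (-(2 * (n : ℝ) + 1) * |y|) =
      ((2 * (n : ℝ) + 1) / (2 * (n : ℝ) * ((n : ℝ) + 1))) *
        (Real.exp (-x) - Real.exp (-(2 * (n : ℝ) + 1) * x)) := by
  have hn1 : (1 : ℝ) ≤ (n : ℝ) := by exact_mod_cast hn
  set a : ℝ := 2 * (n : ℝ) + 1 with hadef
  have ha1 : (0 : ℝ) < a - 1 := by rw [hadef]; linarith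
  have ha2 : (0 : ℝ) < a + 1 := by rw [hadef]; linarith
  set f : ℝ → ℝ := fun y =>
    Real.sign (x - y) * Real.exp (-|x - y|) * Real.exp (-a * |y|) with hfdef
  set g1 : ℝ → ℝ := fun y => Real.exp (-x) * Real.exp ((a + 1) * y) with hg1
  set g2 : ℝ → ℝ := fun y => Real.exp (-x) * Real.exp (-((a - 1) * y)) with hg2
  set g3 : ℝ → ℝ := fun y => -(Real.exp x * Real.exp (-((a + 1) * y))) with hg3
  -- pointwise identifications
  have heq1 : Set.EqOn f g1 (Set.Iic 0) := by
    intro y hy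
    simp only [Set.mem_Iic] at hy
    have hxy : 0 < x - y := by linarith
    simp only [hfdef, hg1]
    rw [Real.sign_of_pos hxy, abs_of_pos hxy, abs_of_nonpos hy, one_mul, ← Real.exp_add,
      ← Real.exp_add]
    congr 1
    ring
  have heq3 : Set.EqOn f g3 (Set.Ioi x) := by
    intro y hy
    simp only [Set.mem_Ioi] at hy
    have hxy : x - y < 0 := by linarith
    have hy0 : 0 ≤ y := by linarith
    simp only [hfdef, hg3]
    rw [Real.sign_of_neg hxy, abs_of_neg hxy, abs_of_nonneg hy0, neg_one_mul, neg_mul,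
      ← Real.exp_add, ← Real.exp_add]
    congr 2
    ring
  have hne : ∀ᵐ y : ℝ, y ≠ x := by
    have h0 : volume ({x} : Set ℝ) = 0 := measure_singleton x
    have := compl_mem_ae_iff.2 h0
    exact this
  have hae2 : f =ᵐ[volume.restrict (Set.Ioc 0 x)] g2 := by
    rw [Filter.EventuallyEq, ae_restrict_iff' measurableSet_Ioc]
    filter_upwards [hne] with y hy hmem
    obtain ⟨hy0, hyx⟩ := hmem
    have hylt : y < x := lt_of_le_of_ne hyx hy
    have hxy : 0 < x - y := by linarith
    simp only [hfdef, hg2]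
    rw [Real.sign_of_pos hxy, abs_of_pos hxy, abs_of_nonneg hy0.le, one_mul, ← Real.exp_add,
      ← Real.exp_add]
    congr 1
    ring
  -- integrability
  have int1 : IntegrableOn f (Set.Iic 0) :=
    IntegrableOn.congr_fun ((aux_integrable_Iic (a + 1) 0 ha2).const_mul (Real.exp (-x)))
      heq1.symm measurableSet_Iic
  have int2 : IntegrableOn f (Set.Ioc 0 x) := by
    have hg2int : IntegrableOn g2 (Set.Ioc 0 x) := by
      apply Continuous.integrableOn_Ioc
      exact continuous_const.mul (Real.continuous_exp.comp (by continuity))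
    exact hg2int.congr hae2.symm
  have int3 : IntegrableOn f (Set.Ioi x) := by
    have h := (((aux_integrable_Ioi (a + 1) x ha2).const_mul (Real.exp x)).neg :
      Integrable _ (volume.restrict (Set.Ioi x)))
    refine IntegrableOn.congr_fun h (fun y hy => ?_) measurableSet_Ioi
    simpa [hg3, neg_mul] using (heq3 hy).symm
  have intIicx : IntegrableOn f (Set.Iic x) := by
    rw [← Set.Iic_union_Ioc_eq_Iic hx.le]
    exact int1.union int2
  -- split the integral
  have total : ∫ y : ℝ, f y = (∫ y in Set.Iic x, f y) + ∫ y in Set.Ioi x, f y :=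
    (intervalIntegral.integral_Iic_add_Ioi intIicx int3).symm
  have split1 : (∫ y in Set.Iic x, f y) = (∫ y in Set.Iic 0, f y) + ∫ y in Set.Ioc 0 x, f y := by
    rw [← setIntegral_union (Set.Iic_disjoint_Ioc le_rfl) measurableSet_Ioc int1 int2,
      Set.Iic_union_Ioc_eq_Iic hx.le]
  -- compute the three pieces
  have I1 : (∫ y in Set.Iic 0, f y) = Real.exp (-x) * (1 / (a + 1)) := by
    rw [setIntegral_congr_fun measurableSet_Iic heq1]
    simp only [hg1]
    rw [integral_const_mul, aux_int_Iic (a + 1) 0 ha2]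
    simp
  have I2 : (∫ y in Set.Ioc 0 x, f y)
      = Real.exp (-x) * ((1 - Real.exp (-((a - 1) * x))) / (a - 1)) := by
    rw [setIntegral_congr_ae measurableSet_Ioc
      ((ae_restrict_iff' measurableSet_Ioc).1 hae2)]
    simp only [hg2]
    rw [integral_const_mul]
    congr 1
    rw [← intervalIntegral.integral_of_le hx.le]
    have hc : (-(a - 1)) ≠ 0 := neg_ne_zero.2 ha1.ne'
    simp_rw [← neg_mul]
    rw [intervalIntegral.integral_comp_mul_left Real.exp hc, integral_exp]
    simp only [mul_zero, Real.exp_zero, smul_eq_mul]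
    rw [show -(a - 1) * x = -((a - 1) * x) from by ring, inv_neg, neg_mul, ← mul_neg, neg_sub,
      div_eq_inv_mul]
  have I3 : (∫ y in Set.Ioi x, f y)
      = -(Real.exp x * (Real.exp (-((a + 1) * x)) / (a + 1))) := by
    rw [setIntegral_congr_fun measurableSet_Ioi heq3]
    simp only [hg3]
    rw [integral_neg, integral_const_mul, aux_int_Ioi (a + 1) x ha2]
  rw [total, split1, I1, I2, I3]
  have hA : Real.exp (-((a - 1) * x)) = Real.exp x * Real.exp (-a * x) := by
    rw [← Real.exp_add]; congr 1; ring
  have hB : Real.exp (-((a + 1) * x)) = Real.exp (-x) * Real.exp (-a * x) := by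
    rw [← Real.exp_add]; congr 1; ring
  rw [hA, hB]
  have hXA : Real.exp x = (Real.exp (-x))⁻¹ := by
    rw [Real.exp_neg, inv_inv]
  rw [hXA, hadef]
  have hn0 : (n : ℝ) ≠ 0 := by linarith
  have hn2 : (n : ℝ) + 1 ≠ 0 := by linarith
  have hE : Real.exp (-x) ≠ 0 := (Real.exp_pos _).ne'
  field_simp
  ring
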